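/- Logarithmic convexity inequality: for every β > 0 and all u, w > 0, β·u·w·(e^{β(u+w)} − 1) ≥ (u+w)·(e^{βu} − 1)·(e^{βw} − 1). (Equivalently, the function g with g(x) = ln(e^{βx} − 1) − ln x for x > 0 and g(0) = ln β is convex on [0, ∞), so g(u+w) + g(0) ≥ g(u) + g(w).) -/

import Mathlib

open Real

/-- `g(x) = ln(e^{βx} − 1) − ln x` for `x > 0`, with `g(0) = ln β`. -/
noncomputable def gfun (β x : ℝ) : ℝ :=
  if x = 0 then Real.log β else Real.log (Real.exp (β * x) - 1) - Real.log x

lemma gfun_convexOn (β : ℝ) (hβ : 0 < β) : ConvexOn ℝ (Set.Ici (0 : ℝ)) (gfun β) := by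
  have hiD : interior (Set.Ici (0:ℝ)) = Set.Ioi 0 := interior_Ici
  have hpos : ∀ x : ℝ, 0 < x → 0 < Real.exp (β * x) - 1 := by
    intro x hx
    have : (1:ℝ) < Real.exp (β * x) := by
      rw [← Real.exp_zero]
      exact Real.exp_lt_exp.mpr (by positivity)
    linarith
  set φ : ℝ → ℝ := fun x => Real.log (Real.exp (β * x) - 1) - Real.log x with hφ
  have heq : ∀ x : ℝ, x ≠ 0 → gfun β x = φ x := by
    intro x hx; simp [gfun, hx, hφ]
  have heqev : ∀ x : ℝ, 0 < x → gfun β =ᶠ[nhds x] φ := by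
    intro x hx
    filter_upwards [eventually_ne_nhds hx.ne'] with y hy using heq y hy
  -- derivative computations
  have hdφ : ∀ x : ℝ, 0 < x →
      HasDerivAt φ (β * Real.exp (β * x) / (Real.exp (β * x) - 1) - x⁻¹) x := by
    intro x hx
    have h1 : HasDerivAt (fun y : ℝ => Real.exp (β * y) - 1) (β * Real.exp (β * x)) x := by
      have := ((Real.hasDerivAt_exp (β * x)).comp x ((hasDerivAt_id x).const_mul β))
      simpa [mul_comm] using this.sub_const 1
    have h2 : HasDerivAt (fun y : ℝ => Real.log (Real.exp (β * y) - 1))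
        (β * Real.exp (β * x) / (Real.exp (β * x) - 1)) x := h1.log (hpos x hx).ne'
    exact h2.sub (Real.hasDerivAt_log hx.ne')
  refine convexOn_of_hasDerivWithinAt2_nonneg (convex_Ici 0)
    (f' := fun x => β * Real.exp (β * x) / (Real.exp (β * x) - 1) - x⁻¹)
    (f'' := fun x => (x^2)⁻¹ - β^2 * Real.exp (β * x) / (Real.exp (β * x) - 1)^2)
    ?_ ?_ ?_ ?_
  · -- continuity
    intro x hx
    rcases eq_or_lt_of_le (Set.mem_Ici.mp hx) with h0 | h0
    · subst h0
      -- continuous within at 0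
      have hslope : Filter.Tendsto (fun y : ℝ => (Real.exp (β * y) - 1) / y)
          (nhdsWithin 0 (Set.Ioi 0)) (nhds β) := by
        have hd : HasDerivAt (fun y : ℝ => Real.exp (β * y)) β 0 := by
          have := ((Real.hasDerivAt_exp (β * 0)).comp 0 ((hasDerivAt_id 0).const_mul β))
          simpa [Function.comp_def] using this
        have := hasDerivAt_iff_tendsto_slope.mp hd
        have h2 := this.mono_left (nhdsWithin_mono 0 (by
          intro y hy; exact ne_of_gt hy : Set.Ioi (0:ℝ) ⊆ {0}ᶜ))
        refine h2.congr' ?_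
        filter_upwards [self_mem_nhdsWithin] with y hy
        simp [slope_def_field, div_eq_div_iff]
      have hlog : Filter.Tendsto (fun y : ℝ => Real.log ((Real.exp (β * y) - 1) / y))
          (nhdsWithin 0 (Set.Ioi 0)) (nhds (Real.log β)) :=
        ((Real.continuousAt_log hβ.ne').tendsto).comp hslope
      have hg : Filter.Tendsto (gfun β) (nhdsWithin 0 (Set.Ioi 0)) (nhds (Real.log β)) := by
        refine hlog.congr' ?_
        filter_upwards [self_mem_nhdsWithin] with y hy
        rw [heq y (ne_of_gt hy), hφ]
        simp [Real.log_div (hpos y hy).ne' (ne_of_gt hy)]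
      have : ContinuousWithinAt (gfun β) (Set.Ioi 0) 0 := by
        rw [ContinuousWithinAt]
        simpa [gfun] using hg
      rw [← Set.Ioi_insert] at *
      exact this.insert
    · have := ((hdφ x h0).congr_of_eventuallyEq (heqev x h0)).continuousAt
      exact this.continuousWithinAt
  · intro x hx
    rw [hiD] at hx
    exact (((hdφ x hx).congr_of_eventuallyEq (heqev x hx)).hasDerivWithinAt)
  · intro x hx
    rw [hiD] at hx
    have hs := hpos x hx
    have h1 : HasDerivAt (fun y : ℝ => β * Real.exp (β * y)) (β^2 * Real.exp (β * x)) x := by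
      have := ((Real.hasDerivAt_exp (β * x)).comp x ((hasDerivAt_id x).const_mul β))
      simpa [mul_comm, pow_two, mul_assoc] using this.const_mul β
    have h2 : HasDerivAt (fun y : ℝ => Real.exp (β * y) - 1) (β * Real.exp (β * x)) x := by
      have := ((Real.hasDerivAt_exp (β * x)).comp x ((hasDerivAt_id x).const_mul β))
      simpa [mul_comm] using this.sub_const 1
    have hdiv := h1.div h2 hs.ne'
    have hinv : HasDerivAt (fun y : ℝ => y⁻¹) (-1/x^2) x := by
      simpa [Pi.inv_def] using (hasDerivAt_id x).inv (ne_of_gt (Set.mem_Ioi.mp hx))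
    have := hdiv.sub hinv
    have hx2 : HasDerivAt (fun y => β * Real.exp (β * y) / (Real.exp (β * y) - 1) - y⁻¹)
        ((x^2)⁻¹ - β^2 * Real.exp (β * x) / (Real.exp (β * x) - 1)^2) x := by
      refine this.congr_deriv ?_
      field_simp [hs.ne', ne_of_gt (Set.mem_Ioi.mp hx)]
      ring
    exact hx2.hasDerivWithinAt
  · intro x hx
    rw [hiD] at hx
    have hs := hpos x hx
    -- key inequality: (e^{βx}-1)^2 ≥ β^2 x^2 e^{βx}
    have hx' : 0 < x := hx
    have hkey : (β * x)^2 * Real.exp (β * x) ≤ (Real.exp (β * x) - 1)^2 := by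
      set a := β * x with ha
      have hapos : 0 < a := mul_pos hβ hx'
      have hsinh : a / 2 < Real.sinh (a / 2) := Real.self_lt_sinh_iff.mpr (by linarith)
      have e1 : Real.exp (a/2) * Real.exp (a/2) = Real.exp a := by
        rw [← Real.exp_add]; norm_num
      have e2 : Real.exp (a/2) * Real.exp (-(a/2)) = 1 := by
        rw [← Real.exp_add]; norm_num
      have hfact : Real.exp a - 1 = Real.exp (a/2) * (2 * Real.sinh (a/2)) := by
        rw [Real.sinh_eq]; linear_combination e2 - e1
      have h1 : a * Real.exp (a/2) ≤ Real.exp a - 1 := by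
        rw [hfact]
        have := Real.exp_pos (a/2)
        nlinarith
      have h2 : 0 ≤ a * Real.exp (a/2) := by positivity
      have h3 := mul_self_le_mul_self h2 h1
      calc a^2 * Real.exp a = (a * Real.exp (a/2)) * (a * Real.exp (a/2)) := by
            linear_combination (-(a^2)) * e1
        _ ≤ (Real.exp a - 1) * (Real.exp a - 1) := h3
        _ = (Real.exp a - 1)^2 := by ring
    have : β^2 * Real.exp (β * x) / (Real.exp (β * x) - 1)^2 ≤ (x^2)⁻¹ := by
      rw [div_le_iff₀ (by positivity), inv_mul_eq_div, le_div_iff₀ (by positivity)]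
      nlinarith
    linarith

/-- **Logarithmic convexity inequality.** For every `β > 0` and all `u, w > 0`,
`β·u·w·(e^{β(u+w)} − 1) ≥ (u+w)·(e^{βu} − 1)·(e^{βw} − 1)`; equivalently, the function
`g` with `g(x) = ln(e^{βx} − 1) − ln x` for `x > 0` and `g(0) = ln β` is convex on
`[0, ∞)`, so `g(u+w) + g(0) ≥ g(u) + g(w)`. -/
theorem log_convexity_inequality (β u w : ℝ) (hβ : 0 < β) (hu : 0 < u) (hw : 0 < w) :
    β * u * w * (Real.exp (β * (u + w)) - 1) ≥
        (u + w) * (Real.exp (β * u) - 1) * (Real.exp (β * w) - 1) ∧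
      ConvexOn ℝ (Set.Ici (0 : ℝ)) (gfun β) ∧
      gfun β (u + w) + gfun β 0 ≥ gfun β u + gfun β w := by
  have hconv := gfun_convexOn β hβ
  have hS : 0 < u + w := by linarith
  have hθu : (0:ℝ) ≤ u / (u + w) := by positivity
  have hθw : (0:ℝ) ≤ w / (u + w) := by positivity
  have hθ1 : u / (u + w) + w / (u + w) = 1 := by field_simp
  have hmemS : (u + w) ∈ Set.Ici (0:ℝ) := le_of_lt hS
  have hmem0 : (0:ℝ) ∈ Set.Ici (0:ℝ) := Set.self_mem_Ici
  have h1 := hconv.2 hmemS hmem0 hθu hθw hθ1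
  have h2 := hconv.2 hmemS hmem0 hθw hθu (by linarith)
  simp only [smul_eq_mul, mul_zero, add_zero] at h1 h2
  rw [div_mul_cancel₀ u hS.ne'] at h1
  rw [div_mul_cancel₀ w hS.ne'] at h2
  have hpart3 : gfun β (u + w) + gfun β 0 ≥ gfun β u + gfun β w := by
    have := add_le_add h1 h2
    have hc : u / (u + w) * gfun β (u + w) + w / (u + w) * gfun β 0 +
        (w / (u + w) * gfun β (u + w) + u / (u + w) * gfun β 0) =
        gfun β (u + w) + gfun β 0 := by
      field_simp; ring
    linarith [this, hc.ge, hc.le]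
  refine ⟨?_, hconv, hpart3⟩
  -- derive part 1 from part 3
  have hpos : ∀ x : ℝ, 0 < x → 0 < Real.exp (β * x) - 1 := by
    intro x hx
    have : (1:ℝ) < Real.exp (β * x) := by
      rw [← Real.exp_zero]
      exact Real.exp_lt_exp.mpr (by positivity)
    linarith
  have hA := hpos u hu
  have hB := hpos w hw
  have hC := hpos (u + w) hS
  have hgu : gfun β u = Real.log ((Real.exp (β * u) - 1) / u) := by
    simp [gfun, hu.ne', Real.log_div hA.ne' hu.ne']
  have hgw : gfun β w = Real.log ((Real.exp (β * w) - 1) / w) := by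
    simp [gfun, hw.ne', Real.log_div hB.ne' hw.ne']
  have hgS : gfun β (u + w) = Real.log ((Real.exp (β * (u + w)) - 1) / (u + w)) := by
    simp [gfun, hS.ne', Real.log_div hC.ne' hS.ne']
  have hg0 : gfun β 0 = Real.log β := by simp [gfun]
  rw [hgu, hgw, hgS, hg0] at hpart3
  rw [← Real.log_mul (by positivity) hβ.ne', ← Real.log_mul (by positivity) (by positivity)]
    at hpart3
  have hle : (Real.exp (β * u) - 1) / u * ((Real.exp (β * w) - 1) / w) ≤
      (Real.exp (β * (u + w)) - 1) / (u + w) * β := by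
    have := (Real.log_le_log_iff (by positivity) (by positivity)).mp hpart3
    linarith
  rw [div_mul_div_comm, div_mul_eq_mul_div, div_le_div_iff₀ (by positivity) (by positivity)]
    at hle
  nlinarith [hle]
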